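/- arXiv:cs/0406050 — 3 statements merged into one kernel-verified Lean document; each statement's English description precedes it below -/
import Mathlib

section
/- For transmission of a code of rate r over BEC(ε) using Shannon's random parity-check ensemble with maximum-likelihood decoding, the expected block error probability equals ∑_{E=0}^{n·r̄} C(n,E) ε^E (1-ε)^{n-E} (1 - ∏_{i=0}^{E-1}(1 - 2^{i - n·r̄})) + ∑_{E=n·r̄+1}^{n} C(n,E) ε^E (1-ε)^{n-E}, where r̄ = 1-r. -/
set_option maxHeartbeats 1000000

lemma countLI (m E : ℕ) :
    Nat.card {s : Fin E → (Fin m → ZMod 2) // LinearIndependent (ZMod 2) s} =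
      ∏ i ∈ Finset.range E, (2 ^ m - 2 ^ i) := by
  by_cases hE : E ≤ m
  · have := card_linearIndependent (K := ZMod 2) (V := Fin m → ZMod 2) (k := E)
      (by simpa using hE)
    simp only [ZMod.card, Module.finrank_fintype_fun_eq_card, Fintype.card_fin] at this
    rw [this, Finset.prod_range fun i => (2^m-2^i)]
  · push_neg at hE
    have h1 : IsEmpty {s : Fin E → (Fin m → ZMod 2) // LinearIndependent (ZMod 2) s} := by
      refine ⟨fun ⟨s, hs⟩ => ?_⟩
      have := hs.fintype_card_le_finrank
      simp [Module.finrank_fintype_fun_eq_card] at this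
      omega
    rw [Nat.card_of_isEmpty]
    have hmem : m ∈ Finset.range E := Finset.mem_range.2 hE
    exact (Finset.prod_eq_zero hmem (by omega)).symm

open Finset in
lemma countGood (n m : ℕ) (S : Finset (Fin n)) :
    Nat.card {H : Matrix (Fin m) (Fin n) (ZMod 2) //
        LinearIndependent (ZMod 2) (fun j : S => fun i => H i (j : Fin n))} =
      (∏ i ∈ Finset.range S.card, (2 ^ m - 2 ^ i)) * (2 ^ m) ^ (n - S.card) := by
  classical
  let V := Fin m → ZMod 2
  let e1 : Matrix (Fin m) (Fin n) (ZMod 2) ≃ (Fin n → V) :=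
    { toFun := fun H j i => H i j, invFun := fun c i j => c j i,
      left_inv := fun _ => rfl, right_inv := fun _ => rfl }
  let e2 := (Equiv.piEquivPiSubtypeProd (fun j : Fin n => j ∈ S) (fun _ => V))
  let e3 := (e1.trans e2).subtypeEquiv
    (p := fun H => LinearIndependent (ZMod 2) (fun j : S => fun i => H i (j : Fin n)))
    (q := fun y => LinearIndependent (ZMod 2) y.1) (fun H => Iff.rfl)
  let e4 := e3.trans (Equiv.prodSubtypeFstEquivSubtypeProd
    (p := fun f : {x : Fin n // x ∈ S} → V => LinearIndependent (ZMod 2) f))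
  rw [Nat.card_congr e4, Nat.card_prod]
  congr 1
  · let e5 : Fin S.card ≃ {x : Fin n // x ∈ S} := S.equivFin.symm
    have := Nat.card_congr ((Equiv.arrowCongr e5 (Equiv.refl V)).subtypeEquiv
      (p := fun s : Fin S.card → V => LinearIndependent (ZMod 2) s)
      (q := fun f : {x : Fin n // x ∈ S} → V => LinearIndependent (ZMod 2) f)
      (fun g => (linearIndependent_equiv e5.symm (f := g)).symm))
    rw [← this, countLI]
  · rw [Nat.card_eq_fintype_card, Fintype.card_fun]
    congr 1
    · simp [V]
    · rw [Fintype.card_subtype_compl]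
      simp

lemma rankIff (n m : ℕ) (S : Finset (Fin n)) (H : Matrix (Fin m) (Fin n) (ZMod 2)) :
    (H.submatrix id (fun j : S => (j : Fin n))).rank = S.card ↔
      LinearIndependent (ZMod 2) (fun j : S => fun i => H i (j : Fin n)) := by
  rw [Matrix.rank_eq_finrank_span_cols, linearIndependent_iff_card_eq_finrank_span]
  have h : (H.submatrix id (fun j : S => (j : Fin n))).col =
      (fun j : S => fun i => H i (j : Fin n)) := rfl
  rw [h, Set.finrank, Fintype.card_coe]
  exact eq_comm

lemma countBad (n m : ℕ) (S : Finset (Fin n)) :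
    Nat.card {H : Matrix (Fin m) (Fin n) (ZMod 2) //
        (H.submatrix id (fun j : S => (j : Fin n))).rank ≠ S.card} =
      2 ^ (m * n) -
        (∏ i ∈ Finset.range S.card, (2 ^ m - 2 ^ i)) * (2 ^ m) ^ (n - S.card) := by
  classical
  have hcard : Fintype.card (Matrix (Fin m) (Fin n) (ZMod 2)) = 2 ^ (m * n) := by
    rw [Fintype.card_eq_nat_card]
    simp [Matrix, Fintype.card_fun, Nat.card_fun, ← pow_mul, Nat.mul_comm]
  simp only [ne_eq, rankIff]
  rw [Nat.card_eq_fintype_card, Fintype.card_subtype_compl, hcard,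
    ← Nat.card_eq_fintype_card, countGood]

lemma ratioLemma (n m E : ℕ) (hE : E ≤ n) :
    (((2 ^ (m * n) -
        (∏ i ∈ Finset.range E, (2 ^ m - 2 ^ i)) * (2 ^ m) ^ (n - E) : ℕ)) : ℝ) / 2 ^ (m * n) =
      1 - ∏ i ∈ Finset.range E, (1 - (2 : ℝ) ^ ((i : ℤ) - (m : ℤ))) := by
  by_cases hm : E ≤ m
  · have hb : (∏ i ∈ Finset.range E, (2 ^ m - 2 ^ i)) * (2 ^ m) ^ (n - E) ≤ 2 ^ (m * n) := by
      calc (∏ i ∈ Finset.range E, (2 ^ m - 2 ^ i)) * (2 ^ m) ^ (n - E)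
          ≤ (∏ i ∈ Finset.range E, 2 ^ m) * (2 ^ m) ^ (n - E) := by
            gcongr with i hi
            · exact Nat.sub_le _ _
        _ = 2 ^ (m * n) := by
            rw [Finset.prod_const, Finset.card_range, ← pow_add, ← pow_mul,
              Nat.add_sub_cancel' hE, Nat.mul_comm]
    rw [Nat.cast_sub hb]
    have h2 : ((2 : ℝ) ^ (m * n)) ≠ 0 := by positivity
    rw [sub_div]
    norm_num
    have hc : (∏ i ∈ Finset.range E, ((2 ^ m - 2 ^ i : ℕ) : ℝ))
        = ∏ i ∈ Finset.range E, ((2 : ℝ) ^ m - 2 ^ i) := by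
      refine Finset.prod_congr rfl fun i hi => ?_
      have : 2 ^ i ≤ 2 ^ m := Nat.pow_le_pow_right (by norm_num)
        (le_trans (Nat.le_of_lt_succ (Nat.lt_succ_of_lt (Finset.mem_range.1 hi))) hm)
      push_cast [Nat.cast_sub this]
      ring
    rw [hc]
    have hsplit : (2 : ℝ) ^ (m * n) = (2 ^ m) ^ E * (2 ^ m) ^ (n - E) := by
      rw [← pow_add, ← pow_mul, Nat.add_sub_cancel' hE]
    rw [hsplit, mul_comm (((2:ℝ)^m)^E) (((2:ℝ)^m)^(n-E)), ← div_div,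
      mul_div_assoc, div_self (by positivity : ((2:ℝ)^m)^(n-E) ≠ 0), mul_one]
    rw [show ((2:ℝ)^m)^E = ∏ _i ∈ Finset.range E, (2:ℝ)^m by
        rw [Finset.prod_const, Finset.card_range], ← Finset.prod_div_distrib]
    refine Finset.prod_congr rfl fun i hi => ?_
    rw [sub_div, div_self (by positivity : ((2:ℝ)^m) ≠ 0)]
    congr 1
    rw [← zpow_natCast (2:ℝ) i, ← zpow_natCast (2:ℝ) m, ← zpow_sub₀ (by norm_num : (2:ℝ) ≠ 0)]
  · push_neg at hm
    have hz : (∏ i ∈ Finset.range E, (2 ^ m - 2 ^ i)) = 0 :=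
      Finset.prod_eq_zero (Finset.mem_range.2 hm) (by omega)
    have hzr : (∏ i ∈ Finset.range E, (1 - (2 : ℝ) ^ ((i : ℤ) - (m : ℤ)))) = 0 := by
      refine Finset.prod_eq_zero (Finset.mem_range.2 hm) ?_
      simp
    rw [hz, hzr, Nat.zero_mul, Nat.sub_zero]
    push_cast
    rw [div_self (by positivity : ((2:ℝ)^(m*n)) ≠ 0)]
    norm_num

/-- Expected block error probability of Shannon's random parity-check ensemble
(`m = n·r̄` uniformly random parity checks) under ML decoding over BEC(ε):
averaging over the erasure set `S` (each coordinate erased independently with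
probability ε) the probability that the submatrix of erased columns fails to have
full column rank, equals the stated double sum. -/
theorem stmt_2 (n m : ℕ) (hm : m ≤ n) (ε : ℝ) (hε0 : 0 ≤ ε) (hε1 : ε ≤ 1) :
    (∑ S : Finset (Fin n), ε ^ S.card * (1 - ε) ^ (n - S.card) *
      ((Nat.card {H : Matrix (Fin m) (Fin n) (ZMod 2) //
          (H.submatrix id (fun j : S => (j : Fin n))).rank ≠ S.card} : ℝ) / 2 ^ (m * n))) =
    (∑ E ∈ Finset.range (m + 1), (n.choose E : ℝ) * ε ^ E * (1 - ε) ^ (n - E) *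
        (1 - ∏ i ∈ Finset.range E, (1 - (2 : ℝ) ^ ((i : ℤ) - (m : ℤ))))) +
    ∑ E ∈ Finset.Icc (m + 1) n, (n.choose E : ℝ) * ε ^ E * (1 - ε) ^ (n - E) := by
  classical
  set f : ℕ → ℝ := fun E => ε ^ E * (1 - ε) ^ (n - E) *
      (1 - ∏ i ∈ Finset.range E, (1 - (2 : ℝ) ^ ((i : ℤ) - (m : ℤ)))) with hf
  have hstep : (∑ S : Finset (Fin n), ε ^ S.card * (1 - ε) ^ (n - S.card) *
      ((Nat.card {H : Matrix (Fin m) (Fin n) (ZMod 2) //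
          (H.submatrix id (fun j : S => (j : Fin n))).rank ≠ S.card} : ℝ) / 2 ^ (m * n))) =
      ∑ S : Finset (Fin n), f S.card := by
    refine Finset.sum_congr rfl fun S _ => ?_
    rw [countBad, ratioLemma n m S.card (by simpa using S.card_le_univ)]
  rw [hstep]
  have hgroup : (∑ S : Finset (Fin n), f S.card) =
      ∑ E ∈ Finset.range (n + 1), (n.choose E : ℝ) * f E := by
    rw [← Finset.powerset_univ, Finset.sum_powerset]
    simp only [Finset.card_univ, Fintype.card_fin]
    refine Finset.sum_congr rfl fun E _ => ?_
    rw [Finset.sum_powersetCard]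
    simp [Finset.card_univ, nsmul_eq_mul]
  rw [hgroup]
  have hsplit : (∑ E ∈ Finset.range (n + 1), (n.choose E : ℝ) * f E) =
      (∑ E ∈ Finset.range (m + 1), (n.choose E : ℝ) * f E) +
      ∑ E ∈ Finset.Icc (m + 1) n, (n.choose E : ℝ) * f E := by
    rw [Finset.range_eq_Ico, ← Finset.Ico_add_one_right_eq_Icc,
      ← Finset.sum_Ico_consecutive _ (Nat.zero_le (m+1)) (by omega)]
    rw [Finset.range_eq_Ico]
  rw [hsplit]
  congr 1
  · refine Finset.sum_congr rfl fun E _ => ?_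
    simp only [hf]; ring
  · refine Finset.sum_congr rfl fun E hE => ?_
    have hmE : m < E := by
      have := (Finset.mem_Icc.1 hE).1; omega
    have hz : (∏ i ∈ Finset.range E, (1 - (2 : ℝ) ^ ((i : ℤ) - (m : ℤ)))) = 0 :=
      Finset.prod_eq_zero (Finset.mem_range.2 hmE) (by simp)
    simp only [hf, hz]
    ring
end

section
/- The number of labeled trees on l ≥ 1 vertices is l^{l-2} (with the convention that for l=1 and l=2 this gives 1). -/
namespace Cayley

variable {S R S' R' : Type*}

/-- Every iterate eventually leaves `S` into the root set `R`. -/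
inductive ReachR (f : S → S ⊕ R) : S → Prop
  | base (x : S) (r : R) (h : f x = Sum.inr r) : ReachR f x
  | step (x y : S) (h : f x = Sum.inl y) (hy : ReachR f y) : ReachR f x

def Good (f : S → S ⊕ R) : Prop := ∀ x, ReachR f x

lemma reachR_map (e : S ≃ S') (e' : R ≃ R') (f : S → S ⊕ R) (x : S) (h : ReachR f x) :
    ReachR (fun x' => Sum.map e e' (f (e.symm x'))) (e x) := by
  induction h with
  | base x r h => exact .base _ (e' r) (by simp [h])
  | step x y h hy ih => exact .step _ (e y) (by simp [h]) ih

lemma Good.map (e : S ≃ S') (e' : R ≃ R') {f : S → S ⊕ R} (hf : Good f) :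
    Good (fun x' => Sum.map e e' (f (e.symm x'))) := by
  intro x'
  simpa using reachR_map e e' f (e.symm x') (hf _)

def goodCongr (e : S ≃ S') (e' : R ≃ R') :
    {f : S → S ⊕ R // Good f} ≃ {f : S' → S' ⊕ R' // Good f} := by
  refine (Equiv.arrowCongr e (Equiv.sumCongr e e')).subtypeEquiv
    (fun f => ⟨fun h => ?_, fun h => ?_⟩)
  · have h2 := h.map e e'
    convert h2 using 1
    rfl
  · have h2 := h.map e.symm e'.symm
    have he : (fun x => Sum.map e.symm e'.symm
        ((Equiv.arrowCongr e (Equiv.sumCongr e e') f) (e.symm.symm x))) = f := by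
      funext x
      simp only [Equiv.arrowCongr_apply, Equiv.symm_symm, Function.comp_apply,
        Equiv.symm_apply_apply, Equiv.sumCongr_apply]
      cases f x <;> simp
    rwa [he] at h2

noncomputable def N (s r : ℕ) : ℕ := Nat.card {f : Fin s → Fin s ⊕ Fin r // Good f}


lemma N_zero (r : ℕ) : N 0 r = 1 := by
  have : Unique {f : Fin 0 → Fin 0 ⊕ Fin r // Good f} :=
    ⟨⟨⟨Fin.elim0, fun x => x.elim0⟩⟩, fun f => Subtype.ext (funext fun x => x.elim0)⟩
  exact Nat.card_unique

lemma N_right_zero (s : ℕ) (hs : 1 ≤ s) : N s 0 = 0 := by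
  have : IsEmpty {f : Fin s → Fin s ⊕ Fin 0 // Good f} := by
    constructor
    rintro ⟨f, hf⟩
    have : ∀ x, ReachR f x → False := by
      intro x h
      induction h with
      | base x r h => exact r.elim0
      | step x y h hy ih => exact ih
    exact this ⟨0, hs⟩ (hf _)
  simp [N, Nat.card_of_isEmpty]

section decomp
variable [Fintype S] [DecidableEq S]

/-- The set of elements mapping directly into the root set. -/
def Jset (f : S → S ⊕ R) : Finset S := Finset.univ.filter (fun x => (f x).isRight)

lemma mem_Jset {f : S → S ⊕ R} {x : S} : x ∈ Jset f ↔ (f x).isRight := by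
  simp [Jset]

/-- restriction of `f` to the complement of `J`, with new root set `J`. -/
def restrict (f : S → S ⊕ R) (J : Finset S) (hJ : Jset f = J) (x : {x : S // x ∉ J}) :
    {x : S // x ∉ J} ⊕ {x : S // x ∈ J} :=
  let y := (f x.1).getLeft (by
    rcases hy : f x.1 with y | r
    · simp
    · exact absurd (hJ ▸ mem_Jset.2 (by simp [hy])) x.2)
  if hy : y ∈ J then .inr ⟨y, hy⟩ else .inl ⟨y, hy⟩

lemma restrict_eq_of_inl {f : S → S ⊕ R} {J : Finset S} {hJ : Jset f = J}
    {x : {x : S // x ∉ J}} {y : S} (h : f x.1 = Sum.inl y) :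
    restrict f J hJ x = if hy : y ∈ J then .inr ⟨y, hy⟩ else .inl ⟨y, hy⟩ := by
  simp only [restrict, h, Sum.getLeft_inl]

lemma restrict_good {f : S → S ⊕ R} {J : Finset S} {hJ : Jset f = J} (hf : Good f) :
    Good (restrict f J hJ) := by
  rintro ⟨x, hx⟩
  have key : ∀ x : S, ReachR f x → ∀ hx : x ∉ J, ReachR (restrict f J hJ) ⟨x, hx⟩ := by
    intro x hr
    induction hr with
    | base x r h =>
      intro hx
      exact absurd (hJ ▸ mem_Jset.2 (by simp [h])) hx
    | step x y h hy ih =>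
      intro hx
      by_cases hyJ : y ∈ J
      · exact .base _ ⟨y, hyJ⟩ (by rw [restrict_eq_of_inl h]; simp [hyJ])
      · exact .step _ ⟨y, hyJ⟩ (by rw [restrict_eq_of_inl h]; simp [hyJ]) (ih hyJ)
  exact key x (hf x) hx

/-- rebuild a function on `S` from data on a subset `J`. -/
def glue (J : Finset S) (h : {x : S // x ∈ J} → R)
    (g : {x : S // x ∉ J} → {x : S // x ∉ J} ⊕ {x : S // x ∈ J}) (x : S) : S ⊕ R :=
  if hx : x ∈ J then .inr (h ⟨x, hx⟩) else .inl ((g ⟨x, hx⟩).elim Subtype.val Subtype.val)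

lemma Jset_glue (J : Finset S) (h : {x : S // x ∈ J} → R)
    (g : {x : S // x ∉ J} → {x : S // x ∉ J} ⊕ {x : S // x ∈ J}) :
    Jset (glue J h g) = J := by
  ext x
  by_cases hx : x ∈ J <;> simp [mem_Jset, glue, hx]

lemma glue_good (J : Finset S) (h : {x : S // x ∈ J} → R)
    (g : {x : S // x ∉ J} → {x : S // x ∉ J} ⊕ {x : S // x ∈ J}) (hg : Good g) :
    Good (glue J h g) := by
  have root : ∀ x (hx : x ∈ J), ReachR (glue J h g) x :=
    fun x hx => .base _ (h ⟨x, hx⟩) (by simp [glue, hx])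
  have key : ∀ x : {x : S // x ∉ J}, ReachR g x → ReachR (glue J h g) x.1 := by
    intro x hr
    induction hr with
    | base x j h' =>
      refine .step _ j.1 ?_ (root j.1 j.2)
      simp [glue, x.2, h']
    | step x y h' hy ih =>
      refine .step _ y.1 ?_ ih
      simp [glue, x.2, h']
  intro x
  by_cases hx : x ∈ J
  · exact root x hx
  · exact key ⟨x, hx⟩ (hg _)

/-- The fiber of `Jset` over `J` is equivalent to labelled data. -/
noncomputable def fiberEquiv (J : Finset S) :
    {f : S → S ⊕ R // Good f ∧ Jset f = J} ≃
      ({x : S // x ∈ J} → R) ×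
        {g : {x : S // x ∉ J} → {x : S // x ∉ J} ⊕ {x : S // x ∈ J} // Good g} where
  toFun f :=
    ⟨fun j => (f.1 j.1).getRight (by
        have h2 : (j : S) ∈ Jset f.1 := by rw [f.2.2]; exact j.2
        exact mem_Jset.1 h2),
     ⟨restrict f.1 J f.2.2, restrict_good f.2.1⟩⟩
  invFun p := ⟨glue J p.1 p.2.1, glue_good J p.1 p.2.1 p.2.2, Jset_glue J p.1 p.2.1⟩
  left_inv := by
    rintro ⟨f, hf, rfl⟩
    apply Subtype.ext
    funext x
    by_cases hx : x ∈ Jset f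
    · have := mem_Jset.1 hx
      rcases hr : f x with y | r
      · rw [hr] at this; simp at this
      · simp [glue, hx, hr]
    · have : ¬ (f x).isRight := fun h => hx (mem_Jset.2 h)
      rcases hr : f x with y | r
      · simp only [glue, hx, dite_false]
        rw [restrict_eq_of_inl (x := ⟨x, hx⟩) hr]
        by_cases hy : y ∈ Jset f <;> simp [hy, hr]
      · rw [hr] at this; simp at this
  right_inv := by
    rintro ⟨h, g, hg⟩
    refine Prod.ext ?_ ?_
    · funext j
      simp [glue, j.2]
    · apply Subtype.ext
      funext x
      have hx : x.1 ∉ J := x.2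
      have h1 : glue J h g x.1 = Sum.inl ((g x).elim Subtype.val Subtype.val) := by
        simp [glue, hx]
      dsimp only
      rw [restrict_eq_of_inl h1]
      rcases hgx : g x with y | j
      · simp [hgx, y.2]
      · simp [hgx, j.2]

end decomp

lemma card_sigma' {A : Type*} [Fintype A] (F : A → Type*) [∀ i, Finite (F i)] :
    Nat.card (Σ i, F i) = ∑ i, Nat.card (F i) := by
  classical
  letI : ∀ i, Fintype (F i) := fun i => Fintype.ofFinite _
  simp [Nat.card_eq_fintype_card]

lemma card_good_eq_sum (S R : Type*) [Fintype S] [Fintype R] [DecidableEq S] :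
    Nat.card {f : S → S ⊕ R // Good f}
      = ∑ J : Finset S, (Fintype.card R) ^ J.card * N (Fintype.card S - J.card) J.card := by
  classical
  have e1 : {f : S → S ⊕ R // Good f}
      ≃ Σ J : Finset S, {f : S → S ⊕ R // Good f ∧ Jset f = J} := by
    refine (Equiv.sigmaFiberEquiv (fun f : {f : S → S ⊕ R // Good f} => Jset f.1)).symm.trans ?_
    refine Equiv.sigmaCongrRight (fun J => ?_)
    exact (Equiv.subtypeSubtypeEquivSubtypeInter (fun f : S → S ⊕ R => Good f) (fun f => Jset f = J))
  rw [Nat.card_congr e1, card_sigma']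
  refine Finset.sum_congr rfl (fun J _ => ?_)
  rw [Nat.card_congr (fiberEquiv J), Nat.card_prod]
  congr 1
  · rw [Nat.card_fun, Nat.card_eq_fintype_card, Nat.card_eq_fintype_card, Fintype.card_coe]
  · have hc1 : Fintype.card {x : S // x ∉ J} = Fintype.card S - J.card := by
      rw [Fintype.card_subtype_compl]
      congr 1
      exact Fintype.card_coe J
    have hc2 : Fintype.card {x : S // x ∈ J} = J.card := Fintype.card_coe J
    rw [N, Nat.card_congr (goodCongr (Fintype.equivFinOfCardEq hc1) (Fintype.equivFinOfCardEq hc2))]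

lemma N_rec (s r : ℕ) :
    N s r = ∑ j ∈ Finset.range (s+1), Nat.choose s j * (r ^ j * N (s - j) j) := by
  classical
  rw [N, card_good_eq_sum]
  simp only [Fintype.card_fin]
  rw [show (Finset.univ : Finset (Finset (Fin s))) = (Finset.univ : Finset (Fin s)).powerset from
    (Finset.powerset_univ).symm]
  rw [Finset.powerset_card_disjiUnion]
  erw [Finset.sum_disjiUnion]
  refine Finset.sum_congr (by simp) (fun j hj => ?_)
  have : ∀ J ∈ Finset.powersetCard j (Finset.univ : Finset (Fin s)),
      r ^ J.card * N (s - J.card) J.card = r ^ j * N (s - j) j := by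
    intro J hJ
    rw [(Finset.mem_powersetCard.1 hJ).2]
  rw [Finset.sum_congr rfl this, Finset.sum_const, Finset.card_powersetCard, Finset.card_univ,
    Fintype.card_fin, smul_eq_mul]

lemma N_formula (s : ℕ) : ∀ r, N (s+1) r = r * (r + (s+1)) ^ s := by
  induction s using Nat.strong_induction_on with
  | _ s ih =>
    intro r
    have hpos : 0 < s + 1 := Nat.succ_pos s
    refine Nat.eq_of_mul_eq_mul_left hpos ?_
    rw [N_rec]
    rw [Finset.mul_sum]
    have key : ∀ j ∈ Finset.range (s+1+1),
        (s+1) * (Nat.choose (s+1) j * (r ^ j * N (s+1-j) j))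
          = Nat.choose (s+1) j * (j * (s+1) ^ (s+1-j)) * r ^ j := by
      intro j hj
      rw [Finset.mem_range] at hj
      rcases Nat.eq_zero_or_pos j with rfl | hj0
      · simp [N_right_zero (s+1) (Nat.succ_le_succ (Nat.zero_le s))]
      rcases Nat.lt_or_ge j (s+1) with hjlt | hjge
      · -- 1 ≤ j ≤ s
        have hsj : s + 1 - j = (s - j) + 1 := by omega
        have hlt : s - j < s := by omega
        rw [hsj, ih (s - j) hlt j]
        have hj2 : j + (s - j + 1) = s + 1 := by omega
        rw [hj2]
        have hpow : (s+1) * (s+1) ^ (s - j) = (s+1) ^ (s - j + 1) := by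
          rw [pow_succ]; ring
        calc (s+1) * (Nat.choose (s+1) j * (r ^ j * (j * (s+1) ^ (s - j))))
            = Nat.choose (s+1) j * (j * ((s+1) * (s+1) ^ (s - j))) * r ^ j := by ring
          _ = Nat.choose (s+1) j * (j * (s+1) ^ (s - j + 1)) * r ^ j := by rw [hpow]
      · -- j = s+1
        have hj1 : j = s + 1 := le_antisymm (by omega) hjge
        subst hj1
        rw [Nat.sub_self, N_zero]
        ring
    rw [Finset.sum_congr rfl key]
    -- now prove the Abel/binomial identity
    rw [Finset.sum_range_succ']
    simp only [Nat.choose_zero_right, Nat.zero_mul, Nat.mul_zero, pow_zero, mul_one, one_mul,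
      add_zero, zero_mul, mul_zero]
    have step : ∀ i, Nat.choose (s+1) (i+1) * ((i+1) * (s+1) ^ (s+1-(i+1))) * r ^ (i+1)
        = (s+1) * (r * (Nat.choose s i * (r ^ i * (s+1) ^ (s - i)))) := by
      intro i
      have h1 : Nat.choose (s+1) (i+1) * (i+1) = (s+1) * Nat.choose s i :=
        (Nat.add_one_mul_choose_eq s i).symm
      have h2 : s + 1 - (i+1) = s - i := by omega
      rw [h2]
      calc Nat.choose (s+1) (i+1) * ((i+1) * (s+1) ^ (s-i)) * r ^ (i+1)
          = (Nat.choose (s+1) (i+1) * (i+1)) * (s+1) ^ (s-i) * (r * r ^ i) := by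
            rw [pow_succ]; ring
        _ = ((s+1) * Nat.choose s i) * (s+1) ^ (s-i) * (r * r ^ i) := by rw [h1]
        _ = (s+1) * (r * (Nat.choose s i * (r ^ i * (s+1) ^ (s - i)))) := by ring
    rw [Finset.sum_congr rfl (fun i _ => step i), ← Finset.mul_sum, ← Finset.mul_sum]
    congr 1
    congr 1
    rw [add_pow]
    refine Finset.sum_congr rfl (fun i _ => ?_)
    push_cast
    ring


open SimpleGraph Walk

variable {V : Type*} [DecidableEq V] (v₀ : V)

/-- `x` eventually reaches the root `v₀` under iteration of `f`. -/
inductive ReachRoot (f : V → V) : V → Prop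
  | root : ReachRoot f v₀
  | step (x : V) (h : ReachRoot f (f x)) : ReachRoot f x

variable {v₀}

lemma ReachRoot.exists_iter {f : V → V} {x : V} (h : ReachRoot v₀ f x) :
    ∃ k, f^[k] x = v₀ := by
  induction h with
  | root => exact ⟨0, rfl⟩
  | step x h ih =>
    obtain ⟨k, hk⟩ := ih
    exact ⟨k + 1, by rw [Function.iterate_succ_apply]; exact hk⟩

/-- The graph associated to a parent function. -/
def PGraph (f : V → V) : SimpleGraph V where
  Adj x y := x ≠ y ∧ (f x = y ∨ f y = x)
  symm := by
    constructor
    rintro x y ⟨hne, h⟩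
    exact ⟨hne.symm, h.symm⟩
  loopless := by constructor; rintro x ⟨hne, -⟩; exact hne rfl

section parentfun

variable (f : V → V) (hf : f v₀ = v₀ ∧ ∀ x, ReachRoot v₀ f x)
include hf

/-- number of steps to reach the root -/
noncomputable def depth (x : V) : ℕ := Nat.find (hf.2 x).exists_iter

lemma depth_spec (x : V) : f^[depth f hf x] x = v₀ := Nat.find_spec (hf.2 x).exists_iter

lemma depth_pos {x : V} (hx : x ≠ v₀) : 0 < depth f hf x := by
  rcases Nat.eq_zero_or_pos (depth f hf x) with h | h
  · have hs := depth_spec f hf x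
    rw [h] at hs
    simp only [Function.iterate_zero_apply] at hs
    exact absurd hs hx
  · exact h

lemma depth_parent_lt {x : V} (hx : x ≠ v₀) : depth f hf (f x) < depth f hf x := by
  have h1 : f^[depth f hf x - 1] (f x) = v₀ := by
    rw [← Function.iterate_succ_apply, Nat.succ_eq_add_one, Nat.sub_add_cancel (depth_pos f hf hx)]
    exact depth_spec f hf x
  calc depth f hf (f x) ≤ depth f hf x - 1 := Nat.find_le h1
    _ < depth f hf x := Nat.sub_lt (depth_pos f hf hx) one_pos

lemma parent_ne {x : V} (hx : x ≠ v₀) : f x ≠ x := by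
  intro h
  exact absurd (congrArg (depth f hf) h) (Nat.ne_of_lt (depth_parent_lt f hf hx))

lemma adj_parent {x : V} (hx : x ≠ v₀) : (PGraph f).Adj x (f x) :=
  ⟨fun h => parent_ne f hf hx h.symm, Or.inl rfl⟩

/-- the canonical walk from `x` to the root -/
noncomputable def canon (x : V) : (PGraph f).Walk x v₀ :=
  if h : x = v₀ then h ▸ Walk.nil else Walk.cons (adj_parent f hf h) (canon (f x))
termination_by depth f hf x
decreasing_by exact depth_parent_lt f hf h

lemma canon_self : canon f hf v₀ = Walk.nil := by rw [canon]; simp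

lemma canon_of_ne {x : V} (h : x ≠ v₀) :
    canon f hf x = Walk.cons (adj_parent f hf h) (canon f hf (f x)) := by
  rw [canon]; simp [h]

lemma canon_support : ∀ n, ∀ x, depth f hf x ≤ n →
    ∀ y ∈ (canon f hf x).support, depth f hf y ≤ depth f hf x := by
  intro n
  induction n with
  | zero =>
    intro x hx y hy
    have hx0 : x = v₀ := by
      by_contra h
      have := depth_pos f hf h
      omega
    subst hx0
    rw [canon_self] at hy
    simp at hy
    subst hy
    exact le_refl _
  | succ n ih =>
    intro x hx y hy
    by_cases h : x = v₀
    · subst h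
      rw [canon_self] at hy
      simp at hy
      subst hy
      exact le_refl _
    · rw [canon_of_ne f hf h] at hy
      rw [Walk.support_cons] at hy
      rcases List.mem_cons.mp hy with rfl | hy
      · exact le_refl _
      · have hlt := depth_parent_lt f hf h
        have := ih (f x) (by omega) y hy
        omega

lemma canon_isPath : ∀ n, ∀ x, depth f hf x ≤ n → (canon f hf x).IsPath := by
  intro n
  induction n with
  | zero =>
    intro x hx
    have hx0 : x = v₀ := by
      by_contra h
      have := depth_pos f hf h
      omega
    subst hx0
    rw [canon_self]
    exact Walk.IsPath.nil
  | succ n ih =>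
    intro x hx
    by_cases h : x = v₀
    · subst h; rw [canon_self]; exact Walk.IsPath.nil
    · rw [canon_of_ne f hf h]
      have hlt := depth_parent_lt f hf h
      rw [Walk.cons_isPath_iff]
      refine ⟨ih (f x) (by omega), fun hmem => ?_⟩
      have := canon_support f hf n (f x) (by omega) x hmem
      omega

lemma canon_isPath' (x : V) : (canon f hf x).IsPath := canon_isPath f hf _ x le_rfl

lemma reachable_root (x : V) : (PGraph f).Reachable x v₀ := ⟨canon f hf x⟩

lemma pgraph_connected : (PGraph f).Connected := by
  have : Nonempty V := ⟨v₀⟩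
  refine ⟨fun x y => ?_⟩
  exact (reachable_root f hf x).trans (reachable_root f hf y).symm

/-- all paths to the root agree with the canonical one -/
lemma path_eq_canon : ∀ n, ∀ x, ∀ p : (PGraph f).Walk x v₀, p.length ≤ n → p.IsPath →
    p = canon f hf x := by
  intro n
  induction n with
  | zero =>
    intro x p hlen hp
    have : p.length = 0 := by omega
    have hx : x = v₀ := by
      have := p.eq_of_length_eq_zero this
      exact this
    subst hx
    rw [canon_self]
    rwa [Walk.isPath_iff_eq_nil] at hp
  | succ n ih =>
    intro x p hlen hp
    by_cases hx : x = v₀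
    · subst hx
      rw [canon_self]
      rwa [Walk.isPath_iff_eq_nil] at hp
    · cases p with
      | nil => exact absurd rfl hx
      | cons hadj q =>
        rename_i z
        rw [Walk.cons_isPath_iff] at hp
        obtain ⟨hq, hxq⟩ := hp
        have hlq : q.length ≤ n := by
          simp only [Walk.length_cons] at hlen
          omega
        rcases hadj.2 with hfx | hfz
        · -- f x = z
          subst hfx
          have : q = canon f hf (f x) := ih (f x) q hlq hq
          subst this
          rw [canon_of_ne f hf hx]
        · -- f z = x
          exfalso
          have hz : z ≠ v₀ := by
            intro h
            subst h
            rw [hf.1] at hfz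
            exact hx hfz.symm
          have : q = canon f hf z := ih z q hlq hq
          subst this
          apply hxq
          rw [canon_of_ne f hf hz, Walk.support_cons]
          right
          rw [hfz]
          exact Walk.start_mem_support _

lemma pgraph_acyclic : (PGraph f).IsAcyclic := by
  intro u c hc
  -- pick a vertex of maximal depth on the cycle
  obtain ⟨v, hv', hvmax'⟩ := Finset.exists_max_image c.support.toFinset (depth f hf)
    ⟨u, List.mem_toFinset.mpr c.start_mem_support⟩
  have hv : v ∈ c.support := List.mem_toFinset.mp hv'
  have hvmax : ∀ y ∈ c.support, depth f hf y ≤ depth f hf v :=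
    fun y hy => hvmax' y (List.mem_toFinset.mpr hy)
  have hcyc := hc.rotate hv
  have hsup : ∀ y ∈ (c.rotate v hv).support, depth f hf y ≤ depth f hf v := by
    intro y hy
    rw [Walk.support_eq_cons] at hy
    rcases List.mem_cons.mp hy with rfl | hy
    · exact le_refl _
    · exact hvmax y (List.mem_of_mem_tail ((Walk.support_rotate c v hv).mem_iff.mp hy))
  generalize hg : c.rotate v hv = c' at hcyc hsup
  clear hg hc hv hvmax hv'  hvmax'
  cases c' with
  | nil => simpa using hcyc.three_le_length
  | cons hadj q =>
    rename_i a
    have h3 : 3 ≤ (Walk.cons hadj q).length := hcyc.three_le_length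
    rw [Walk.cons_isCycle_iff] at hcyc
    obtain ⟨hq, hvq⟩ := hcyc
    have hmemq : ∀ y ∈ q.support, depth f hf y ≤ depth f hf v := by
      intro y hy
      exact hsup y (by rw [Walk.support_cons]; exact List.mem_cons_of_mem _ hy)
    -- first edge: f v = a
    have hfva : f v = a := by
      rcases hadj.2 with h | h
      · exact h
      · exfalso
        have ha0 : a ≠ v₀ := by
          intro h0
          subst h0
          rw [hf.1] at h
          exact hadj.1 h.symm
        have h1 : depth f hf v < depth f hf a := by
          have := depth_parent_lt f hf ha0
          rw [h] at this
          exact this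
        have h2 : depth f hf a ≤ depth f hf v :=
          hmemq a q.start_mem_support
        omega
    -- last edge: consider the reverse of q
    cases hqr : q.reverse with
    | nil =>
      have hq0 : q.length = 0 := by
        have := congrArg Walk.length hqr
        simpa using this
      rw [Walk.length_cons] at h3
      omega
    | cons hadj2 q2 =>
      rename_i b
      have hfvb : f v = b := by
        rcases hadj2.2 with h | h
        · exact h
        · exfalso
          have hb0 : b ≠ v₀ := by
            intro h0
            subst h0
            rw [hf.1] at h
            exact hadj2.1 h.symm
          have h1 : depth f hf v < depth f hf b := by
            have := depth_parent_lt f hf hb0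
            rw [h] at this
            exact this
          have h2 : depth f hf b ≤ depth f hf v := by
            apply hmemq
            have : b ∈ q.reverse.support := by
              rw [hqr, Walk.support_cons]
              exact List.mem_cons_of_mem _ q2.start_mem_support
            rwa [Walk.support_reverse, List.mem_reverse] at this
          omega
      -- so a = b and the edge s(v,a) appears in q
      apply hvq
      have hab : a = b := by rw [← hfva, hfvb]
      subst hab
      have : s(v, a) ∈ q.reverse.edges := by
        rw [hqr, Walk.edges_cons]
        exact List.mem_cons_self
      rwa [Walk.edges_reverse, List.mem_reverse] at this

lemma pgraph_isTree : (PGraph f).IsTree :=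
  ⟨pgraph_connected f hf, pgraph_acyclic f hf⟩

end parentfun

section tree
variable {G : SimpleGraph V} (hG : G.IsTree)

/-- the unique path between two vertices of a tree -/
noncomputable def treePath (x y : V) : G.Walk x y := (hG.existsUnique_path x y).exists.choose

lemma treePath_isPath (x y : V) : (treePath hG x y).IsPath :=
  (hG.existsUnique_path x y).exists.choose_spec

lemma treePath_unique {x y : V} (p : G.Walk x y) (hp : p.IsPath) : p = treePath hG x y :=
  (hG.existsUnique_path x y).unique hp (treePath_isPath hG x y)

/-- the parent function of a tree with root `v₀` -/
noncomputable def parent (x : V) : V := (treePath hG x v₀).getVert 1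

lemma treePath_self : treePath hG v₀ v₀ = Walk.nil :=
  (treePath_unique hG Walk.nil Walk.IsPath.nil).symm

lemma parent_root : parent (v₀ := v₀) hG v₀ = v₀ := by
  rw [parent, treePath_self]
  rfl

lemma parent_spec {x : V} (hx : x ≠ v₀) :
    ∃ (z : V) (hadj : G.Adj x z) (q : G.Walk z v₀),
      treePath hG x v₀ = Walk.cons hadj q ∧ q.IsPath ∧ parent (v₀ := v₀) hG x = z := by
  cases hp : treePath hG x v₀ with
  | nil => exact absurd rfl hx
  | cons hadj q =>
    rename_i z
    refine ⟨z, hadj, q, rfl, ?_, ?_⟩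
    · have := treePath_isPath hG x v₀
      rw [hp, Walk.cons_isPath_iff] at this
      exact this.1
    · rw [parent, hp, Walk.getVert_cons_succ, Walk.getVert_zero]

lemma reach_parent : ∀ n, ∀ x, (treePath hG x v₀).length ≤ n →
    ReachRoot v₀ (parent (v₀ := v₀) hG) x := by
  intro n
  induction n with
  | zero =>
    intro x hlen
    have h0 : (treePath hG x v₀).length = 0 := by omega
    have hx : x = v₀ := (treePath hG x v₀).eq_of_length_eq_zero h0
    subst hx
    exact ReachRoot.root
  | succ n ih =>
    intro x hlen
    by_cases hx : x = v₀
    · subst hx; exact ReachRoot.root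
    · obtain ⟨z, hadj, q, hp, hq, hpar⟩ := parent_spec hG hx
      refine ReachRoot.step x ?_
      rw [hpar]
      have hql : q.length ≤ n := by
        have := congrArg Walk.length hp
        rw [Walk.length_cons] at this
        omega
      have : q = treePath hG z v₀ := treePath_unique hG q hq
      exact ih z (this ▸ hql)

lemma parent_isParent :
    parent (v₀ := v₀) hG v₀ = v₀ ∧ ∀ x, ReachRoot v₀ (parent (v₀ := v₀) hG) x :=
  ⟨parent_root hG, fun x => reach_parent hG _ x le_rfl⟩

/-- the tree built from the parent function of a tree is the tree itself -/
lemma pgraph_parent : PGraph (parent (v₀ := v₀) hG) = G := by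
  ext x y
  show (x ≠ y ∧ _) ↔ _
  constructor
  · rintro ⟨hne, h | h⟩
    · have hx : x ≠ v₀ := by
        rintro rfl
        rw [parent_root hG] at h
        exact hne h
      obtain ⟨z, hadj, q, hp, hq, hpar⟩ := parent_spec hG hx
      rw [← h, hpar]
      exact hadj
    · have hy : y ≠ v₀ := by
        rintro rfl
        rw [parent_root hG] at h
        exact hne h.symm
      obtain ⟨z, hadj, q, hp, hq, hpar⟩ := parent_spec hG hy
      rw [← h, hpar]
      exact hadj.symm
  · intro hxy
    refine ⟨hxy.ne, ?_⟩
    set px := treePath hG x v₀ with hpx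
    set py := treePath hG y v₀ with hpy
    by_cases hx : x ∈ py.support
    · -- then y ∉ px.support, and py = cons (y~x) px
      right
      have hynotin : y ∉ px.support := by
        intro hy
        have hdrop : px.dropUntil y hy = py :=
          treePath_unique hG _ ((treePath_isPath hG x v₀).dropUntil hy)
        have hspec := Walk.take_spec px hy
        have hnodup : px.support.Nodup := (treePath_isPath hG x v₀).support_nodup
        rw [← hspec, Walk.support_append] at hnodup
        rw [List.nodup_append] at hnodup
        have hx1 : x ∈ (px.takeUntil y hy).support := Walk.start_mem_support _
        have hx2 : x ∈ (px.dropUntil y hy).support.tail := by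
          have hcons := Walk.support_eq_cons (px.dropUntil y hy)
          rw [hdrop] at hcons ⊢
          rw [hcons] at hx
          rcases List.mem_cons.mp hx with h' | h'
          · exact absurd h' hxy.ne
          · exact h'
        exact hnodup.2.2 x hx1 x hx2 rfl
      have hpath : (Walk.cons hxy.symm px).IsPath := by
        rw [Walk.cons_isPath_iff]
        exact ⟨treePath_isPath hG x v₀, hynotin⟩
      have := treePath_unique hG _ hpath
      rw [parent, ← this, Walk.getVert_cons_succ, Walk.getVert_zero]
    · left
      have hpath : (Walk.cons hxy py).IsPath := by
        rw [Walk.cons_isPath_iff]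
        exact ⟨treePath_isPath hG y v₀, hx⟩
      have := treePath_unique hG _ hpath
      rw [parent, ← this, Walk.getVert_cons_succ, Walk.getVert_zero]

end tree

lemma parent_pgraph (f : V → V) (hf : f v₀ = v₀ ∧ ∀ x, ReachRoot v₀ f x) :
    parent (v₀ := v₀) (pgraph_isTree f hf) = f := by
  funext x
  by_cases hx : x = v₀
  · subst hx
    rw [parent_root, hf.1]
  · have hcan : treePath (pgraph_isTree f hf) x v₀ = canon f hf x :=
      path_eq_canon f hf _ x _ le_rfl (treePath_isPath _ x v₀)
    rw [parent, hcan, canon_of_ne f hf hx, Walk.getVert_cons_succ, Walk.getVert_zero]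

variable (v₀) in
noncomputable def treeEquivParent :
    {G : SimpleGraph V // G.IsTree} ≃
      {f : V → V // f v₀ = v₀ ∧ ∀ x, ReachRoot v₀ f x} where
  toFun G := ⟨parent (v₀ := v₀) G.2, parent_isParent G.2⟩
  invFun f := ⟨PGraph f.1, pgraph_isTree f.1 f.2⟩
  left_inv G := Subtype.ext (pgraph_parent G.2)
  right_inv f := Subtype.ext (parent_pgraph f.1 f.2)


variable {V : Type*} [DecidableEq V] {v₀ : V}

variable (v₀) in
noncomputable def parentEquivGood :
    {f : V → V // f v₀ = v₀ ∧ ∀ x, ReachRoot v₀ f x} ≃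
      {g : {x : V // x ≠ v₀} → {x : V // x ≠ v₀} ⊕ Fin 1 // Good g} where
  toFun f := ⟨fun x => if h : f.1 x.1 = v₀ then Sum.inr 0 else Sum.inl ⟨f.1 x.1, h⟩, by
    have key : ∀ x, ReachRoot v₀ f.1 x → ∀ hx : x ≠ v₀,
        ReachR (fun x : {x : V // x ≠ v₀} =>
          if h : f.1 x.1 = v₀ then (Sum.inr 0 : {x : V // x ≠ v₀} ⊕ Fin 1)
          else Sum.inl ⟨f.1 x.1, h⟩) ⟨x, hx⟩ := by
      intro x hr
      induction hr with
      | root => intro hx; exact absurd rfl hx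
      | step x h ih =>
        intro hx
        by_cases h0 : f.1 x = v₀
        · exact .base _ 0 (by simp [h0])
        · exact .step _ ⟨f.1 x, h0⟩ (by simp [h0]) (ih h0)
    rintro ⟨x, hx⟩
    exact key x (f.2.2 x) hx⟩
  invFun g := ⟨fun x => if h : x = v₀ then v₀
      else (g.1 ⟨x, h⟩).elim Subtype.val (fun _ => v₀), by
    refine ⟨dif_pos rfl, ?_⟩
    have key : ∀ x : {x : V // x ≠ v₀}, ReachR g.1 x →
        ReachRoot v₀ (fun x => if h : x = v₀ then v₀
          else (g.1 ⟨x, h⟩).elim Subtype.val (fun _ => v₀)) x.1 := by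
      intro x hr
      induction hr with
      | base x r h =>
        refine .step x.1 ?_
        have hv : (if h : x.1 = v₀ then v₀
            else (g.1 ⟨x.1, h⟩).elim Subtype.val (fun _ => v₀)) = v₀ := by
          simp only [dif_neg x.2]
          cases x
          rw [h]
          rfl
        rw [hv]
        exact .root
      | step x y h hy ih =>
        refine .step x.1 ?_
        have hv : (if h : x.1 = v₀ then v₀
            else (g.1 ⟨x.1, h⟩).elim Subtype.val (fun _ => v₀)) = y.1 := by
          simp only [dif_neg x.2]
          cases x
          rw [h]
          rfl
        rw [hv]
        exact ih
    intro x
    by_cases hx : x = v₀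
    · subst hx; exact .root
    · exact key ⟨x, hx⟩ (g.2 _)⟩
  left_inv f := by
    apply Subtype.ext
    funext x
    by_cases hx : x = v₀
    · subst hx
      simp only [dif_pos rfl]
      exact f.2.1.symm
    · simp only [dif_neg hx]
      by_cases h0 : f.1 x = v₀
      · simp [h0]
      · simp [h0]
  right_inv g := by
    apply Subtype.ext
    funext x
    rcases hgx : g.1 x with y | r
    · have hF : (if h : x.1 = v₀ then v₀
          else (g.1 ⟨x.1, h⟩).elim Subtype.val (fun _ => v₀)) = y.1 := by
        simp only [dif_neg x.2]
        cases x
        rw [hgx]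
        rfl
      simp only [hF]
      rw [dif_neg y.2]
    · have hF : (if h : x.1 = v₀ then v₀
          else (g.1 ⟨x.1, h⟩).elim Subtype.val (fun _ => v₀)) = v₀ := by
        simp only [dif_neg x.2]
        cases x
        rw [hgx]
        rfl
      simp only [hF]
      rw [dif_pos trivial]
      exact congrArg Sum.inr (Subsingleton.elim _ _)

end Cayley

open Cayley in
/-- Cayley's formula: the number of labeled trees on `l ≥ 1` vertices is `l^{l-2}`
(with natural subtraction, so the value is `1` for `l = 1, 2`). -/
theorem stmt_8 (l : ℕ) (hl : 1 ≤ l) :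
    Nat.card {G : SimpleGraph (Fin l) // G.IsTree} = l ^ (l - 2) := by
  classical
  set v₀ : Fin l := ⟨0, hl⟩ with hv₀
  rw [Nat.card_congr (treeEquivParent v₀), Nat.card_congr (parentEquivGood v₀)]
  have hc : Fintype.card {x : Fin l // x ≠ v₀} = l - 1 := by
    rw [Fintype.card_subtype_compl, Fintype.card_subtype_eq, Fintype.card_fin]
  rw [Nat.card_congr (goodCongr (Fintype.equivFinOfCardEq hc) (Equiv.refl (Fin 1)))]
  show N (l - 1) 1 = l ^ (l - 2)
  rcases l with _ | l
  · omega
  rcases l with _ | l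
  · simpa using N_zero 1
  · have h1 : l + 1 + 1 - 1 = l + 1 := rfl
    rw [h1, N_formula l 1]
    have h2 : l + 1 + 1 - 2 = l := rfl
    rw [h2, one_mul]
    congr 1
    omega
end

section
/- Fix ℓ ≥ 2 and suppose the scaling P_B(n, ℓ, r, ε) = Q(√n(ε*(ℓ,r) - ε)/α(ℓ,r)) holds exactly for Poisson ensembles, together with the invariance P_B(n,ℓ,r,nε) = P_B(n',ℓ,r',n'ε') whenever nε = n'ε' and (1-r)n = (1-r')n'. Then ε*(ℓ,r') = ε*(ℓ,r)·(1-r')/(1-r) and α(ℓ,r') = α(ℓ,r)·((1-r')/(1-r))^{1/2}. -/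
/-- The standard Gaussian tail function `Q(z) = (1/√(2π)) ∫_z^∞ e^{-x²/2} dx`. -/
noncomputable def Qfun (z : ℝ) : ℝ :=
  (1 / Real.sqrt (2 * Real.pi)) * ∫ x in Set.Ioi z, Real.exp (-x ^ 2 / 2)

lemma gauss_integrable : MeasureTheory.Integrable (fun x : ℝ => Real.exp (-x ^ 2 / 2)) := by
  have h := integrable_exp_neg_mul_sq (by norm_num : (0:ℝ) < 1/2)
  convert h using 2 with x
  ring_nf

lemma Qfun_strictAnti : StrictAnti Qfun := by
  intro z w hzw
  have hsplit : (∫ x in Set.Ioi z, Real.exp (-x ^ 2 / 2)) =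
      (∫ x in Set.Ioc z w, Real.exp (-x ^ 2 / 2)) + ∫ x in Set.Ioi w, Real.exp (-x ^ 2 / 2) := by
    rw [← MeasureTheory.setIntegral_union (Set.Ioc_disjoint_Ioi le_rfl) measurableSet_Ioi
      gauss_integrable.integrableOn gauss_integrable.integrableOn,
      Set.Ioc_union_Ioi_eq_Ioi hzw.le]
  have hpos : 0 < ∫ x in Set.Ioc z w, Real.exp (-x ^ 2 / 2) := by
    rw [← intervalIntegral.integral_of_le hzw.le]
    apply intervalIntegral.intervalIntegral_pos_of_pos
    · exact gauss_integrable.intervalIntegrable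
    · intro x; positivity
    · exact hzw
  have hc : 0 < 1 / Real.sqrt (2 * Real.pi) := by
    positivity
  unfold Qfun
  have : (∫ x in Set.Ioi w, Real.exp (-x ^ 2 / 2)) < ∫ x in Set.Ioi z, Real.exp (-x ^ 2 / 2) := by
    rw [hsplit]; linarith
  exact mul_lt_mul_of_pos_left this hc

/-- If the block error probability of Poisson ensembles satisfies exactly the scaling
`P(n,ρ,ε) = Q(√n(ε*(ρ)-ε)/α(ρ))` together with the invariance
`P(n,r,ε) = P(n',r',ε')` whenever `nε = n'ε'` and `(1-r)n = (1-r')n'`, then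
`ε*(r') = ε*(r)(1-r')/(1-r)` and `α(r') = α(r)√((1-r')/(1-r))`. -/
theorem stmt_11 (P : ℝ → ℝ → ℝ → ℝ) (εs α : ℝ → ℝ) (r r' : ℝ)
    (hr : r < 1) (hr' : r' < 1)
    (hεs : ∀ ρ : ℝ, ρ < 1 → εs ρ ∈ Set.Ioo (0 : ℝ) 1)
    (hα : ∀ ρ : ℝ, ρ < 1 → 0 < α ρ)
    (hscal : ∀ ρ : ℝ, ρ < 1 → ∀ n : ℝ, 0 < n → ∀ ε : ℝ,
      P n ρ ε = Qfun (Real.sqrt n * (εs ρ - ε) / α ρ))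
    (hinv : ∀ n n' ε ε' : ℝ, 0 < n → 0 < n' →
      n * ε = n' * ε' → (1 - r) * n = (1 - r') * n' → P n r ε = P n' r' ε') :
    εs r' = εs r * (1 - r') / (1 - r) ∧
    α r' = α r * Real.sqrt ((1 - r') / (1 - r)) := by
  have h1r : 0 < 1 - r := by linarith
  have h1r' : 0 < 1 - r' := by linarith
  set c : ℝ := (1 - r) / (1 - r') with hc
  have hcpos : 0 < c := by positivity
  have hsc : 0 < Real.sqrt c := Real.sqrt_pos.mpr hcpos
  have hαr := hα r hr
  have hαr' := hα r' hr'
  have hεr := hεs r hr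
  -- key identity
  have key : ∀ ε : ℝ, (εs r - ε) / α r = Real.sqrt c * (εs r' - ε / c) / α r' := by
    intro ε
    have hinv1 := hinv 1 c ε (ε / c) one_pos hcpos (by field_simp)
      (by rw [mul_one, hc]; field_simp)
    rw [hscal r hr 1 one_pos ε, hscal r' hr' c hcpos (ε / c)] at hinv1
    have := Qfun_strictAnti.injective hinv1
    rw [Real.sqrt_one, one_mul] at this
    exact this
  have k1 := key (εs r)
  have k0 := key 0
  simp only [sub_self, zero_div] at k1
  have hεs' : εs r' = εs r / c := by
    have h := k1.symm
    rw [div_eq_zero_iff] at h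
    rcases h with h | h
    · rcases mul_eq_zero.mp h with h | h
      · exact absurd h (ne_of_gt hsc)
      · linarith
    · exact absurd h (ne_of_gt hαr')
  constructor
  · rw [hεs', hc]; field_simp
  · -- from k0 : εs r / α r = √c * (εs r' - 0/c) / α r'
    rw [hεs'] at k0
    have hεpos : 0 < εs r := hεr.1
    have : α r' = α r * Real.sqrt c / c := by
      have hne : εs r ≠ 0 := ne_of_gt hεpos
      field_simp at k0 ⊢
      nlinarith [k0]
    rw [this]
    have hsq : Real.sqrt ((1 - r') / (1 - r)) = (Real.sqrt c)⁻¹ := by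
      rw [← Real.sqrt_inv, hc]
      congr 1
      field_simp
    rw [hsq]
    rw [div_eq_iff (ne_of_gt hcpos)]
    rw [mul_assoc, ← Real.mul_self_sqrt hcpos.le]
    field_simp
    rw [Real.sqrt_sq hsc.le]
end
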